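/- Let n ∈ ℕ, let Ω ⊆ ℝⁿ be a bounded open set, and let s ∈ (0,1]. For every c₀ > 0 and A ≥ 0 there exists a constant C > 0, depending only on s, c₀ and A, with the following property: if f : ℝⁿ → ℂ satisfies N_{Z,s}(f) ≤ A and ‖f x‖ ≥ c₀ for every x ∈ Ω, then the pointwise reciprocal f⁻¹ : x ↦ (f x)⁻¹ satisfies N_{Z,s}(f⁻¹) ≤ C. -/

import Mathlib

open scoped ENNReal NNReal

/-- The sup norm `N_C(f) = ⨆_{x ∈ Ω} ‖f x‖`, valued in `[0,∞]`. -/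
noncomputable def NC {n : ℕ} (Ω : Set (EuclideanSpace ℝ (Fin n)))
    (f : EuclideanSpace ℝ (Fin n) → ℂ) : ℝ≥0∞ :=
  ⨆ x ∈ Ω, (‖f x‖₊ : ℝ≥0∞)

/-- The Hölder quantity
`N_{H,σ}(f) = N_C(f) + ⨆_{x ≠ y ∈ Ω} ‖f x − f y‖ / ‖x − y‖^σ`, valued in `[0,∞]`. -/
noncomputable def NH {n : ℕ} (Ω : Set (EuclideanSpace ℝ (Fin n))) (σ : ℝ)
    (f : EuclideanSpace ℝ (Fin n) → ℂ) : ℝ≥0∞ :=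
  NC Ω f + ⨆ x ∈ Ω, ⨆ y ∈ Ω, ⨆ _ : x ≠ y,
    (‖f x - f y‖₊ : ℝ≥0∞) / (‖x - y‖₊ : ℝ≥0∞) ^ σ

/-- The Zygmund quantity
`N_{Z,s}(f) = N_{H,s/2}(f) + ⨆ ‖f(x+2h) − 2 f(x+h) + f x‖ / ‖h‖^s`, the supremum being over
`h ≠ 0` and `x` with `x, x+h, x+2h ∈ Ω`; valued in `[0,∞]`. -/
noncomputable def NZ {n : ℕ} (Ω : Set (EuclideanSpace ℝ (Fin n))) (s : ℝ)
    (f : EuclideanSpace ℝ (Fin n) → ℂ) : ℝ≥0∞ :=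
  NH Ω (s / 2) f +
    ⨆ x : EuclideanSpace ℝ (Fin n), ⨆ h : EuclideanSpace ℝ (Fin n),
      ⨆ _ : h ≠ 0, ⨆ _ : x ∈ Ω, ⨆ _ : x + h ∈ Ω, ⨆ _ : x + (2 : ℝ) • h ∈ Ω,
        (‖f (x + (2 : ℝ) • h) - 2 * f (x + h) + f x‖₊ : ℝ≥0∞) / (‖h‖₊ : ℝ≥0∞) ^ s


private lemma ofReal_norm_eq_coe_nnnorm {E : Type*} [SeminormedAddGroup E] (a : E) :
    ENNReal.ofReal ‖a‖ = (‖a‖₊ : ℝ≥0∞) :=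
  ENNReal.ofReal_eq_coe_nnreal _

private lemma ofReal_div_le' {K num den : ℝ} (hnum : 0 ≤ num) (hK : 0 ≤ K)
    (h : num ≤ K * den) :
    ENNReal.ofReal num / ENNReal.ofReal den ≤ ENNReal.ofReal K := by
  refine ENNReal.div_le_of_le_mul ?_
  rw [← ENNReal.ofReal_mul hK]
  exact ENNReal.ofReal_le_ofReal h

private lemma le_of_ofReal_div_le' {A num den : ℝ} (hA : 0 ≤ A) (hden : 0 < den)
    (h : ENNReal.ofReal num / ENNReal.ofReal den ≤ ENNReal.ofReal A) :
    num ≤ A * den := by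
  rw [ENNReal.div_le_iff (ENNReal.ofReal_pos.2 hden).ne' ENNReal.ofReal_ne_top] at h
  rw [← ENNReal.ofReal_mul hA] at h
  exact (ENNReal.ofReal_le_ofReal_iff (by positivity)).1 h

private lemma norm_inv_sub_inv' {a b : ℂ} {c₀ : ℝ} (hc : 0 < c₀)
    (ha : c₀ ≤ ‖a‖) (hb : c₀ ≤ ‖b‖) :
    ‖a⁻¹ - b⁻¹‖ ≤ ‖a - b‖ / c₀ ^ 2 := by
  have ha0 : a ≠ 0 := by intro h; rw [h, norm_zero] at ha; linarith
  have hb0 : b ≠ 0 := by intro h; rw [h, norm_zero] at hb; linarith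
  have hid : a⁻¹ - b⁻¹ = (b - a) / (a * b) := by field_simp
  rw [hid, norm_div, norm_mul, norm_sub_rev]
  apply div_le_div_of_nonneg_left (norm_nonneg _) (by positivity)
  nlinarith [norm_nonneg a, norm_nonneg b]

private lemma norm_inv_zyg' {a b c : ℂ} {c₀ : ℝ} (hc : 0 < c₀)
    (ha : c₀ ≤ ‖a‖) (hb : c₀ ≤ ‖b‖) (hcc : c₀ ≤ ‖c‖) :
    ‖c⁻¹ - 2 * b⁻¹ + a⁻¹‖ ≤
      (‖b‖ * ‖c - 2 * b + a‖ + 2 * (‖b - a‖ * ‖b - c‖)) / c₀ ^ 3 := by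
  have ha0 : a ≠ 0 := by intro h; rw [h, norm_zero] at ha; linarith
  have hb0 : b ≠ 0 := by intro h; rw [h, norm_zero] at hb; linarith
  have hc0 : c ≠ 0 := by intro h; rw [h, norm_zero] at hcc; linarith
  have hid : c⁻¹ - 2 * b⁻¹ + a⁻¹ =
      -(b * (c - 2 * b + a) + 2 * ((b - a) * (b - c))) / (a * b * c) := by
    field_simp; ring
  rw [hid, norm_div, norm_neg, norm_mul, norm_mul]
  have hnum : ‖b * (c - 2 * b + a) + 2 * ((b - a) * (b - c))‖ ≤
      ‖b‖ * ‖c - 2 * b + a‖ + 2 * (‖b - a‖ * ‖b - c‖) := by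
    refine (norm_add_le _ _).trans ?_
    simp [norm_mul]
  refine div_le_div₀ (by positivity) hnum (by positivity) ?_
  have h1 : c₀ * c₀ ≤ ‖a‖ * ‖b‖ := mul_le_mul ha hb hc.le (norm_nonneg a)
  calc c₀ ^ 3 = c₀ * c₀ * c₀ := by ring
    _ ≤ ‖a‖ * ‖b‖ * ‖c‖ := mul_le_mul h1 hcc hc.le (by positivity)


/-- Reciprocals in the Zygmund space `𝒞^s(Ω)`.
For `s ∈ (0,1]`, `c₀ > 0` and `A ≥ 0` there is `C > 0` depending only on `s, c₀, A` such
that for every `n`, every bounded open `Ω ⊆ ℝⁿ`, and every `f : ℝⁿ → ℂ` with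
`N_{Z,s}(f) ≤ A` and `‖f x‖ ≥ c₀` on `Ω`, the pointwise reciprocal satisfies
`N_{Z,s}(f⁻¹) ≤ C`. -/
theorem zygmund_inverse (s : ℝ) (hs0 : 0 < s) (hs1 : s ≤ 1)
    (c₀ : ℝ) (hc₀ : 0 < c₀) (A : ℝ) (hA : 0 ≤ A) :
    ∃ C : ℝ, 0 < C ∧
      ∀ (n : ℕ) (Ω : Set (EuclideanSpace ℝ (Fin n))),
        Bornology.IsBounded Ω → IsOpen Ω →
        ∀ f : EuclideanSpace ℝ (Fin n) → ℂ,
          NZ Ω s f ≤ ENNReal.ofReal A →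
          (∀ x ∈ Ω, c₀ ≤ ‖f x‖) →
          NZ Ω s (fun x => (f x)⁻¹) ≤ ENNReal.ofReal C := by

  refine ⟨c₀⁻¹ + A / c₀ ^ 2 + 3 * A ^ 2 / c₀ ^ 3, by positivity, ?_⟩
  intro n Ω hΩb hΩo f hf hlow
  -- pointwise bounds extracted from `hf`
  have hC : ∀ x ∈ Ω, ‖f x‖ ≤ A := by
    intro x hx
    have h1 : (‖f x‖₊ : ℝ≥0∞) ≤ ENNReal.ofReal A := by
      refine le_trans ?_ hf
      simp only [NZ, NH, NC]
      refine le_trans ?_ (le_trans le_self_add le_self_add)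
      exact le_iSup_of_le x (le_iSup_of_le hx le_rfl)
    rw [← ofReal_norm_eq_coe_nnnorm] at h1
    exact (ENNReal.ofReal_le_ofReal_iff hA).1 h1
  have hH : ∀ x ∈ Ω, ∀ y ∈ Ω, ‖f x - f y‖ ≤ A * ‖x - y‖ ^ (s / 2) := by
    intro x hx y hy
    rcases eq_or_ne x y with rfl | hxy
    · simp; positivity
    · have hne : x - y ≠ 0 := sub_ne_zero.2 hxy
      have hpos : (0 : ℝ) < ‖x - y‖ := norm_pos_iff.2 hne
      have h1 : (‖f x - f y‖₊ : ℝ≥0∞) / (‖x - y‖₊ : ℝ≥0∞) ^ (s / 2) ≤ ENNReal.ofReal A := by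
        refine le_trans ?_ hf
        simp only [NZ, NH]
        refine le_trans ?_ (le_trans le_add_self le_self_add)
        exact le_iSup_of_le x (le_iSup_of_le hx (le_iSup_of_le y (le_iSup_of_le hy
          (le_iSup_of_le hxy le_rfl))))
      rw [← ofReal_norm_eq_coe_nnnorm, ← ofReal_norm_eq_coe_nnnorm,
        ENNReal.ofReal_rpow_of_pos hpos] at h1
      exact le_of_ofReal_div_le' hA (by positivity) h1
  have hZ : ∀ x h : EuclideanSpace ℝ (Fin n), h ≠ 0 → x ∈ Ω → x + h ∈ Ω →
      x + (2 : ℝ) • h ∈ Ω →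
      ‖f (x + (2 : ℝ) • h) - 2 * f (x + h) + f x‖ ≤ A * ‖h‖ ^ s := by
    intro x h hne hx hxh hx2h
    have hpos : (0 : ℝ) < ‖h‖ := norm_pos_iff.2 hne
    have h1 : (‖f (x + (2 : ℝ) • h) - 2 * f (x + h) + f x‖₊ : ℝ≥0∞) / (‖h‖₊ : ℝ≥0∞) ^ s
        ≤ ENNReal.ofReal A := by
      refine le_trans ?_ hf
      simp only [NZ]
      refine le_trans ?_ le_add_self
      exact le_iSup_of_le x (le_iSup_of_le h (le_iSup_of_le hne (le_iSup_of_le hx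
        (le_iSup_of_le hxh (le_iSup_of_le hx2h le_rfl)))))
    rw [← ofReal_norm_eq_coe_nnnorm, ← ofReal_norm_eq_coe_nnnorm,
      ENNReal.ofReal_rpow_of_pos hpos] at h1
    exact le_of_ofReal_div_le' hA (by positivity) h1
  -- now bound the three pieces for the reciprocal
  have hCg : NC Ω (fun x => (f x)⁻¹) ≤ ENNReal.ofReal c₀⁻¹ := by
    refine iSup₂_le fun x hx => ?_
    rw [← ofReal_norm_eq_coe_nnnorm]
    refine ENNReal.ofReal_le_ofReal ?_
    simp only [norm_inv]
    exact inv_anti₀ hc₀ (hlow x hx)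
  have hHg : (⨆ x ∈ Ω, ⨆ y ∈ Ω, ⨆ _ : x ≠ y,
      (‖(f x)⁻¹ - (f y)⁻¹‖₊ : ℝ≥0∞) / (‖x - y‖₊ : ℝ≥0∞) ^ (s / 2))
      ≤ ENNReal.ofReal (A / c₀ ^ 2) := by
    refine iSup₂_le fun x hx => iSup₂_le fun y hy => iSup_le fun hxy => ?_
    have hpos : (0 : ℝ) < ‖x - y‖ := norm_pos_iff.2 (sub_ne_zero.2 hxy)
    rw [← ofReal_norm_eq_coe_nnnorm, ← ofReal_norm_eq_coe_nnnorm,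
      ENNReal.ofReal_rpow_of_pos hpos]
    refine ofReal_div_le' (norm_nonneg _) (by positivity) ?_
    calc ‖(f x)⁻¹ - (f y)⁻¹‖ ≤ ‖f x - f y‖ / c₀ ^ 2 :=
          norm_inv_sub_inv' hc₀ (hlow x hx) (hlow y hy)
      _ ≤ (A * ‖x - y‖ ^ (s / 2)) / c₀ ^ 2 := by
          apply div_le_div_of_nonneg_right ?_ (by positivity)
          · exact hH x hx y hy
      _ = A / c₀ ^ 2 * ‖x - y‖ ^ (s / 2) := by ring
  have hZg : (⨆ x : EuclideanSpace ℝ (Fin n), ⨆ h : EuclideanSpace ℝ (Fin n),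
      ⨆ _ : h ≠ 0, ⨆ _ : x ∈ Ω, ⨆ _ : x + h ∈ Ω, ⨆ _ : x + (2 : ℝ) • h ∈ Ω,
        (‖(f (x + (2 : ℝ) • h))⁻¹ - 2 * (f (x + h))⁻¹ + (f x)⁻¹‖₊ : ℝ≥0∞) /
          (‖h‖₊ : ℝ≥0∞) ^ s) ≤ ENNReal.ofReal (3 * A ^ 2 / c₀ ^ 3) := by
    refine iSup_le fun x => iSup_le fun h => iSup_le fun hne => iSup_le fun hx =>
      iSup_le fun hxh => iSup_le fun hx2h => ?_
    have hpos : (0 : ℝ) < ‖h‖ := norm_pos_iff.2 hne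
    rw [← ofReal_norm_eq_coe_nnnorm, ← ofReal_norm_eq_coe_nnnorm,
      ENNReal.ofReal_rpow_of_pos hpos]
    refine ofReal_div_le' (norm_nonneg _) (by positivity) ?_
    have e1 : (x + h) - x = h := by abel
    have e2 : (x + h) - (x + (2 : ℝ) • h) = -h := by
      rw [two_smul]; abel
    have hu : ‖f (x + h) - f x‖ ≤ A * ‖h‖ ^ (s / 2) := by
      have := hH (x + h) hxh x hx
      rwa [e1] at this
    have hv : ‖f (x + h) - f (x + (2 : ℝ) • h)‖ ≤ A * ‖h‖ ^ (s / 2) := by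
      have := hH (x + h) hxh (x + (2 : ℝ) • h) hx2h
      rwa [e2, norm_neg] at this
    have hb : ‖f (x + h)‖ ≤ A := hC (x + h) hxh
    have hΔ := hZ x h hne hx hxh hx2h
    have hrw : ‖h‖ ^ (s / 2) * ‖h‖ ^ (s / 2) = ‖h‖ ^ s := by
      rw [← Real.rpow_add hpos]; ring_nf
    calc ‖(f (x + (2 : ℝ) • h))⁻¹ - 2 * (f (x + h))⁻¹ + (f x)⁻¹‖
        ≤ (‖f (x + h)‖ * ‖f (x + (2 : ℝ) • h) - 2 * f (x + h) + f x‖ +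
            2 * (‖f (x + h) - f x‖ * ‖f (x + h) - f (x + (2 : ℝ) • h)‖)) / c₀ ^ 3 :=
          norm_inv_zyg' hc₀ (hlow x hx) (hlow (x + h) hxh) (hlow _ hx2h)
      _ ≤ (A * (A * ‖h‖ ^ s) + 2 * ((A * ‖h‖ ^ (s / 2)) * (A * ‖h‖ ^ (s / 2)))) / c₀ ^ 3 := by
          apply div_le_div_of_nonneg_right ?_ (by positivity)
          have t1 : ‖f (x + h)‖ * ‖f (x + (2 : ℝ) • h) - 2 * f (x + h) + f x‖
              ≤ A * (A * ‖h‖ ^ s) :=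
            mul_le_mul hb hΔ (norm_nonneg _) hA
          have t2 : ‖f (x + h) - f x‖ * ‖f (x + h) - f (x + (2 : ℝ) • h)‖
              ≤ (A * ‖h‖ ^ (s / 2)) * (A * ‖h‖ ^ (s / 2)) :=
            mul_le_mul hu hv (norm_nonneg _) (by positivity)
          linarith
      _ = 3 * A ^ 2 / c₀ ^ 3 * ‖h‖ ^ s := by
          field_simp
          linear_combination (2 * A ^ 2) * hrw
    done
  calc NZ Ω s (fun x => (f x)⁻¹)
      ≤ (ENNReal.ofReal c₀⁻¹ + ENNReal.ofReal (A / c₀ ^ 2)) +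
          ENNReal.ofReal (3 * A ^ 2 / c₀ ^ 3) := by
        simp only [NZ, NH]
        exact add_le_add (add_le_add hCg hHg) hZg
    _ = ENNReal.ofReal (c₀⁻¹ + A / c₀ ^ 2 + 3 * A ^ 2 / c₀ ^ 3) := by
        rw [← ENNReal.ofReal_add (by positivity) (by positivity),
          ← ENNReal.ofReal_add (by positivity) (by positivity)]
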